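/- The graph T — obtained from a path x_1 x_2 x_3 x_4 x_5 by attaching a path x_3 x_6 x_7 of length two at the middle vertex — is not a co-TT graph. -/
import Mathlib


/-- `G` is a co-TT (signed-interval) graph. -/
def IsCoTT {V : Type*} (G : SimpleGraph V) : Prop :=
  ∃ l r : V → ℝ, ∀ u v : V, u ≠ v → (G.Adj u v ↔ l u ≤ r v ∧ l v ≤ r u)

/-- The graph `T`: path `x₁x₂x₃x₄x₅` (vertices `0,…,4`) with a path `x₃x₆x₇`
(`2 — 5 — 6`) attached at the middle vertex. -/
def Tgraph : SimpleGraph (Fin 7) := SimpleGraph.fromRel (fun a b =>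
  (a = 0 ∧ b = 1) ∨ (a = 1 ∧ b = 2) ∨ (a = 2 ∧ b = 3) ∨ (a = 3 ∧ b = 4) ∨
  (a = 2 ∧ b = 5) ∨ (a = 5 ∧ b = 6))

theorem Tgraph_not_isCoTT : ¬ IsCoTT Tgraph := by
  rintro ⟨l, r, h⟩
  -- edges
  have e01 := (h 0 1 (by decide)).mp (by simp [Tgraph, SimpleGraph.fromRel_adj])
  have e12 := (h 1 2 (by decide)).mp (by simp [Tgraph, SimpleGraph.fromRel_adj])
  have e23 := (h 2 3 (by decide)).mp (by simp [Tgraph, SimpleGraph.fromRel_adj])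
  have e34 := (h 3 4 (by decide)).mp (by simp [Tgraph, SimpleGraph.fromRel_adj])
  have e25 := (h 2 5 (by decide)).mp (by simp [Tgraph, SimpleGraph.fromRel_adj])
  have e56 := (h 5 6 (by decide)).mp (by simp [Tgraph, SimpleGraph.fromRel_adj])
  -- non-edges, as disjunctions of strict inequalities
  have non : ∀ u v : Fin 7, u ≠ v → ¬ Tgraph.Adj u v → r v < l u ∨ r u < l v := by
    intro u v huv hna
    have := (h u v huv).not.mp hna
    rcases not_and_or.mp this with h1 | h1
    · exact Or.inl (lt_of_not_ge h1)
    · exact Or.inr (lt_of_not_ge h1)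
  have n02 := non 0 2 (by decide) (by simp [Tgraph, SimpleGraph.fromRel_adj])
  have n24 := non 2 4 (by decide) (by simp [Tgraph, SimpleGraph.fromRel_adj])
  have n26 := non 2 6 (by decide) (by simp [Tgraph, SimpleGraph.fromRel_adj])
  have n13 := non 1 3 (by decide) (by simp [Tgraph, SimpleGraph.fromRel_adj])
  have n15 := non 1 5 (by decide) (by simp [Tgraph, SimpleGraph.fromRel_adj])
  have n35 := non 3 5 (by decide) (by simp [Tgraph, SimpleGraph.fromRel_adj])
  -- vertices 1, 3, 5 are positive (l ≤ r), since they are not simplicial-leaves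
  have pos1 : l 1 ≤ r 1 := by
    by_contra hneg
    push_neg at hneg
    rcases n02 with h1 | h1 <;> linarith [e01.1, e01.2, e12.1, e12.2]
  have pos3 : l 3 ≤ r 3 := by
    by_contra hneg
    push_neg at hneg
    rcases n24 with h1 | h1 <;> linarith [e23.1, e23.2, e34.1, e34.2]
  have pos5 : l 5 ≤ r 5 := by
    by_contra hneg
    push_neg at hneg
    rcases n26 with h1 | h1 <;> linarith [e25.1, e25.2, e56.1, e56.2]
  obtain ⟨e01a, e01b⟩ := e01
  obtain ⟨e12a, e12b⟩ := e12
  obtain ⟨e23a, e23b⟩ := e23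
  obtain ⟨e34a, e34b⟩ := e34
  obtain ⟨e25a, e25b⟩ := e25
  obtain ⟨e56a, e56b⟩ := e56
  rcases n13 with h13 | h13 <;> rcases n15 with h15 | h15 <;> rcases n35 with h35 | h35 <;>
    rcases n02 with h02 | h02 <;> rcases n24 with h24 | h24 <;> rcases n26 with h26 | h26 <;>
    linarith
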